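/- Fix n ≥ 1 and let σ = cone(e₁, …, e_{2n}) ⊆ ℝ^{2n} be the nonnegative orthant. Set e_{2n+1} = (1/3)(1,2,…,1,2) and e_{2n+2} = (1/3)(2,1,…,2,1). Then every point x ∈ σ lies in at least one of the cones σ_{i,j} = cone(e₁,…,ê_{2i},…,ê_{2j-1},…,e_{2n}, e_{2n+1}, e_{2n+2}), σ'_i = cone(e₁,…,ê_{2i},…,e_{2n}, e_{2n+2}), or σ''_j = cone(e₁,…,ê_{2j-1},…,e_{2n}, e_{2n+1}) (for i, j ∈ {1,…,n}), where a hat denotes omission. That is, these cones cover σ. -/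
import Mathlib

lemma sum_single_aux (m : ℕ) (f : Fin m → ℝ) :
    (∑ k, f k • (Pi.single k 1 : Fin m → ℝ)) = f := by
  funext j
  simp [Finset.sum_apply, Pi.single_apply]

/-- The cones `σ_{i,j}`, `σ'_i`, `σ''_j` (obtained from the nonnegative orthant
`σ = cone(e₁,…,e_{2n})` by removing `e_{2i}` and/or `e_{2j-1}` and adding
`e_{2n+1} = (1/3)(1,2,…,1,2)` and/or `e_{2n+2} = (1/3)(2,1,…,2,1)`) cover `σ`. -/
theorem stmt_16 (n : ℕ) (hn : 1 ≤ n)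
    (e₁ e₂ : Fin (2 * n) → ℝ)
    (he₁ : e₁ = fun i => if i.1 % 2 = 0 then 1 / 3 else 2 / 3)
    (he₂ : e₂ = fun i => if i.1 % 2 = 0 then 2 / 3 else 1 / 3)
    (x : Fin (2 * n) → ℝ) (hx : ∀ i, 0 ≤ x i) :
    (∃ i j : Fin n, ∃ c : Fin (2 * n) → ℝ, ∃ s t : ℝ,
      (∀ k, 0 ≤ c k) ∧ 0 ≤ s ∧ 0 ≤ t ∧
      c ⟨2 * i.1 + 1, by have := i.2; omega⟩ = 0 ∧
      c ⟨2 * j.1, by have := j.2; omega⟩ = 0 ∧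
      x = (∑ k, c k • (Pi.single k 1 : Fin (2 * n) → ℝ)) + s • e₁ + t • e₂) ∨
    (∃ i : Fin n, ∃ c : Fin (2 * n) → ℝ, ∃ t : ℝ,
      (∀ k, 0 ≤ c k) ∧ 0 ≤ t ∧
      c ⟨2 * i.1 + 1, by have := i.2; omega⟩ = 0 ∧
      x = (∑ k, c k • (Pi.single k 1 : Fin (2 * n) → ℝ)) + t • e₂) ∨
    (∃ j : Fin n, ∃ c : Fin (2 * n) → ℝ, ∃ t : ℝ,
      (∀ k, 0 ≤ c k) ∧ 0 ≤ t ∧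
      c ⟨2 * j.1, by have := j.2; omega⟩ = 0 ∧
      x = (∑ k, c k • (Pi.single k 1 : Fin (2 * n) → ℝ)) + t • e₁) := by
  subst he₁ he₂
  obtain ⟨i₀, -, hi₀⟩ := Finset.exists_min_image Finset.univ
    (fun i : Fin n => x ⟨2 * i.1, by omega⟩) ⟨⟨0, hn⟩, Finset.mem_univ _⟩
  obtain ⟨j₀, -, hj₀⟩ := Finset.exists_min_image Finset.univ
    (fun j : Fin n => x ⟨2 * j.1 + 1, by omega⟩) ⟨⟨0, hn⟩, Finset.mem_univ _⟩
  set a : ℝ := x ⟨2 * i₀.1, by have := i₀.2; omega⟩ with ha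
  set b : ℝ := x ⟨2 * j₀.1 + 1, by have := j₀.2; omega⟩ with hb
  have ha0 : 0 ≤ a := hx _
  have hb0 : 0 ≤ b := hx _
  have hamin : ∀ k : Fin (2 * n), k.1 % 2 = 0 → a ≤ x k := by
    intro k hk
    have h := hi₀ ⟨k.1 / 2, by have := k.2; omega⟩ (Finset.mem_univ _)
    have he : (⟨2 * (k.1 / 2), by have := k.2; omega⟩ : Fin (2 * n)) = k := by
      apply Fin.ext; simp; omega
    rw [he] at h
    exact h
  have hbmin : ∀ k : Fin (2 * n), k.1 % 2 = 1 → b ≤ x k := by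
    intro k hk
    have h := hj₀ ⟨k.1 / 2, by have := k.2; omega⟩ (Finset.mem_univ _)
    have he : (⟨2 * (k.1 / 2) + 1, by have := k.2; omega⟩ : Fin (2 * n)) = k := by
      apply Fin.ext; simp; omega
    rw [he] at h
    exact h
  rcases lt_or_ge (2 * a) b with h1 | h1
  · -- σ''_j : only e₁, t = 3a
    right; right
    refine ⟨i₀, fun k => x k - (3 * a) * (if k.1 % 2 = 0 then 1 / 3 else 2 / 3), 3 * a,
      ?_, by linarith, ?_, ?_⟩
    · intro k
      rcases Nat.mod_two_eq_zero_or_one k.1 with h | h <;> simp only [h] <;> norm_num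
      · have := hamin k h; linarith
      · have := hbmin k h; linarith
    · simp only [Nat.mul_mod_right, if_pos rfl]
      rw [← ha]; simp only [if_true]; ring
    · rw [sum_single_aux]
      funext k
      simp only [Pi.add_apply, Pi.smul_apply, smul_eq_mul]
      ring
  rcases lt_or_ge (2 * b) a with h2 | h2
  · -- σ'_i : only e₂, t = 3b
    right; left
    refine ⟨j₀, fun k => x k - (3 * b) * (if k.1 % 2 = 0 then 2 / 3 else 1 / 3), 3 * b,
      ?_, by linarith, ?_, ?_⟩
    · intro k
      rcases Nat.mod_two_eq_zero_or_one k.1 with h | h <;> simp only [h] <;> norm_num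
      · have := hamin k h; linarith
      · have := hbmin k h; linarith
    · have : (2 * j₀.1 + 1) % 2 = 1 := by omega
      simp only [this]
      norm_num
      rw [← hb]; ring
    · rw [sum_single_aux]
      funext k
      simp only [Pi.add_apply, Pi.smul_apply, smul_eq_mul]
      ring
  · -- σ_{i,j} : s = 2b - a, t = 2a - b
    left
    refine ⟨j₀, i₀, fun k => x k - (2 * b - a) * (if k.1 % 2 = 0 then 1 / 3 else 2 / 3)
        - (2 * a - b) * (if k.1 % 2 = 0 then 2 / 3 else 1 / 3), 2 * b - a, 2 * a - b,
      ?_, by linarith, by linarith, ?_, ?_, ?_⟩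
    · intro k
      rcases Nat.mod_two_eq_zero_or_one k.1 with h | h <;> simp only [h] <;> norm_num
      · have := hamin k h; linarith
      · have := hbmin k h; linarith
    · have : (2 * j₀.1 + 1) % 2 = 1 := by omega
      simp only [this]
      norm_num
      rw [← hb]; ring
    · simp only [Nat.mul_mod_right, if_pos rfl]
      rw [← ha]; simp only [if_true]; ring
    · rw [sum_single_aux]
      funext k
      simp only [Pi.add_apply, Pi.smul_apply, smul_eq_mul]
      ring
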